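/- There is a bijection between alternating Motzkin paths of length 2k with a rises and ballot sequences of length 2k with exactly a entries equal to 1 at even positions and k − a entries equal to 1 at odd positions; consequently the number of such ballot sequences is the Narayana number N(k,a). -/

import Mathlib

/-- Alternating Motzkin path predicate, steps 1-indexed (index `i : Fin (2*k)`
is step number `i+1`); step value is `(p i : ℤ) - 1 ∈ {-1,0,1}`. -/
def IsAltMotzkin (k : ℕ) (p : Fin (2 * k) → Fin 3) : Prop :=
  (∀ i, ((p i : ℤ) - 1 = 1 → Odd i.1) ∧ ((p i : ℤ) - 1 = -1 → Even i.1)) ∧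
  (∀ j : Fin (2 * k), 0 ≤ ∑ i ∈ Finset.univ.filter (fun i => i ≤ j), ((p i : ℤ) - 1)) ∧
  (∑ i, ((p i : ℤ) - 1)) = 0

/-- Ballot sequence: `x i = true` encodes `+1`, `x i = false` encodes `-1`;
all partial sums nonnegative and total sum `0`. -/
def IsBallot (k : ℕ) (x : Fin (2 * k) → Bool) : Prop :=
  (∀ j : Fin (2 * k), 0 ≤ ∑ i ∈ Finset.univ.filter (fun i => i ≤ j),
      (if x i then (1 : ℤ) else -1)) ∧
  (∑ i, (if x i then (1 : ℤ) else -1)) = 0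

open Finset

namespace Stmt2


lemma choose_id (m b : ℕ) (h : b + 1 ≤ m) :
    (b+2) * (m.choose (b+1) * m.choose (b+1))
      = (m+1).choose (b+1) * m.choose (b+1) + (b+2) * (m.choose b * m.choose (b+2)) := by
  rcases eq_or_lt_of_le h with he | hlt
  · subst he
    simp [Nat.choose_self, Nat.choose_succ_self_right,
      Nat.choose_eq_zero_of_lt (by omega : b + 1 < b + 2)]
  · obtain ⟨d, rfl⟩ : ∃ d, m = b + d + 2 := ⟨m - (b+2), by omega⟩
    have e1 : b + d + 2 - (b+1) = d + 1 := by omega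
    have e2 : b + d + 2 - b = d + 2 := by omega
    have e3 : b + d + 2 - (b+2) = d := by omega
    have e4 : b + d + 2 + 1 - (b+1) = d + 2 := by omega
    qify
    rw [Nat.cast_choose ℚ (by omega : b + 1 ≤ b + d + 2),
      Nat.cast_choose ℚ (by omega : b ≤ b + d + 2),
      Nat.cast_choose ℚ (by omega : b + 2 ≤ b + d + 2),
      Nat.cast_choose ℚ (by omega : b + 1 ≤ b + d + 2 + 1),
      e1, e2, e3, e4]
    have f1 : ((d+1).factorial : ℚ) = (d+1) * d.factorial := by
      push_cast [Nat.factorial_succ]; ring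
    have f2 : ((d+2).factorial : ℚ) = (d+2) * (d+1) * d.factorial := by
      push_cast [Nat.factorial_succ]; ring
    have f3 : ((b+1).factorial : ℚ) = (b+1) * b.factorial := by
      push_cast [Nat.factorial_succ]; ring
    have f4 : ((b+2).factorial : ℚ) = (b+2) * (b+1) * b.factorial := by
      push_cast [Nat.factorial_succ]; ring
    have f5 : ((b+d+2+1).factorial : ℚ) = (b+d+3) * (b+d+2).factorial := by
      push_cast [Nat.factorial_succ]; ring
    rw [f1, f2, f3, f4, f5]
    have hb : (b.factorial : ℚ) ≠ 0 := Nat.cast_ne_zero.mpr (Nat.factorial_ne_zero b)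
    have hd : (d.factorial : ℚ) ≠ 0 := Nat.cast_ne_zero.mpr (Nat.factorial_ne_zero d)
    have hm : ((b+d+2).factorial : ℚ) ≠ 0 := Nat.cast_ne_zero.mpr (Nat.factorial_ne_zero _)
    field_simp
    ring


variable {m : ℕ}

/-- number of elements of `X` with value `< n` -/
def cnt (X : Finset (Fin m)) (n : ℕ) : ℕ := (X.filter (fun i => i.val < n)).card

lemma cnt_zero (X : Finset (Fin m)) : cnt X 0 = 0 := by simp [cnt]

lemma cnt_mono (X : Finset (Fin m)) {n n' : ℕ} (h : n ≤ n') : cnt X n ≤ cnt X n' :=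
  Finset.card_le_card (Finset.monotone_filter_right _ (fun i _ (hi : i.val < n) => lt_of_lt_of_le hi h))

lemma cnt_of_le (X : Finset (Fin m)) {n : ℕ} (h : m ≤ n) : cnt X n = X.card := by
  unfold cnt
  rw [Finset.filter_true_of_mem]
  intro i _
  exact lt_of_lt_of_le i.2 h

lemma cnt_le_card (X : Finset (Fin m)) (n : ℕ) : cnt X n ≤ X.card :=
  Finset.card_filter_le _ _

lemma filter_eq_card (X : Finset (Fin m)) {n : ℕ} (h : n < m) :
    (X.filter (fun i => i.val = n)).card = if (⟨n, h⟩ : Fin m) ∈ X then 1 else 0 := by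
  have : X.filter (fun i => i.val = n) = if (⟨n, h⟩ : Fin m) ∈ X then {(⟨n, h⟩ : Fin m)} else ∅ := by
    split <;> rename_i hmem <;> ext i <;>
      simp only [Finset.mem_filter, Finset.mem_singleton, Finset.notMem_empty, iff_false]
    · constructor
      · rintro ⟨hiX, hval⟩; exact Fin.ext hval
      · rintro rfl; exact ⟨hmem, rfl⟩
    · rintro ⟨hiX, hval⟩
      have : i = ⟨n, h⟩ := Fin.ext hval
      subst this; exact hmem hiX
  rw [this]
  split <;> simp

lemma cnt_succ (X : Finset (Fin m)) {n : ℕ} (h : n < m) :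
    cnt X (n+1) = cnt X n + (if (⟨n, h⟩ : Fin m) ∈ X then 1 else 0) := by
  rw [← filter_eq_card X h]
  unfold cnt
  rw [← Finset.card_union_of_disjoint]
  · congr 1
    ext i
    simp only [Finset.mem_union, Finset.mem_filter]
    constructor
    · rintro ⟨hX, hlt⟩
      rcases Nat.lt_succ_iff_lt_or_eq.mp hlt with h' | h'
      · exact Or.inl ⟨hX, h'⟩
      · exact Or.inr ⟨hX, h'⟩
    · rintro (⟨hX, h'⟩ | ⟨hX, h'⟩) <;> exact ⟨hX, by omega⟩
  · rw [Finset.disjoint_left]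
    intro i hi hi'
    simp only [Finset.mem_filter] at hi hi'
    omega

lemma cnt_succ_of_ge (X : Finset (Fin m)) {n : ℕ} (h : m ≤ n) :
    cnt X (n+1) = cnt X n := by
  rw [cnt_of_le X h, cnt_of_le X (le_trans h (Nat.le_succ n))]

lemma cnt_succ_le (X : Finset (Fin m)) (n : ℕ) : cnt X (n+1) ≤ cnt X n + 1 := by
  rcases lt_or_ge n m with h | h
  · rw [cnt_succ X h]; split <;> omega
  · rw [cnt_succ_of_ge X h]; omega

/-- weak domination: every prefix has at least as many elements of `A` as of `B` -/
def wdom (A B : Finset (Fin m)) : Prop := ∀ s : ℕ, cnt B s ≤ cnt A s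

/-- strict domination -/
def sdom (A B : Finset (Fin m)) : Prop := ∀ r : ℕ, cnt B (r+1) ≤ cnt A r

lemma cnt_stab (X : Finset (Fin m)) {s : ℕ} (h : m ≤ s) : cnt X s = cnt X m := by
  rw [cnt_of_le X h, cnt_of_le X (le_refl m)]

instance wdom_dec (A B : Finset (Fin m)) : Decidable (wdom A B) :=
  decidable_of_iff (∀ s < m+1, cnt B s ≤ cnt A s) (by
    constructor
    · intro hb s
      rcases le_or_gt s m with h | h
      · exact hb s (by omega)
      · rw [cnt_stab A (le_of_lt h), cnt_stab B (le_of_lt h)]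
        exact hb m (by omega)
    · intro h s _; exact h s)

instance sdom_dec (A B : Finset (Fin m)) : Decidable (sdom A B) :=
  decidable_of_iff (∀ r < m+1, cnt B (r+1) ≤ cnt A r) (by
    constructor
    · intro hb r
      rcases le_or_gt r m with h | h
      · exact hb r (by omega)
      · rw [cnt_of_le A (le_of_lt h), cnt_of_le B (by omega)]
        have := hb m (by omega)
        rwa [cnt_of_le A (le_refl m), cnt_of_le B (by omega)] at this
    · intro h r _; exact h r)

/-- tail swap at threshold `s` -/
def swapAt (s : ℕ) (AB : Finset (Fin m) × Finset (Fin m)) : Finset (Fin m) × Finset (Fin m) :=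
  (AB.1.filter (fun i => i.val < s) ∪ AB.2.filter (fun i => ¬ i.val < s),
   AB.2.filter (fun i => i.val < s) ∪ AB.1.filter (fun i => ¬ i.val < s))

lemma swapAt_swapAt (s : ℕ) (AB : Finset (Fin m) × Finset (Fin m)) :
    swapAt s (swapAt s AB) = AB := by
  unfold swapAt
  obtain ⟨A, B⟩ := AB
  simp only [Prod.mk.injEq]
  constructor <;> ext i <;>
    simp only [Finset.mem_union, Finset.mem_filter] <;> tauto

lemma cnt_swapAt_fst (s t : ℕ) (ht : t ≤ s) (AB : Finset (Fin m) × Finset (Fin m)) :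
    cnt (swapAt s AB).1 t = cnt AB.1 t := by
  unfold cnt swapAt
  congr 1
  ext i
  simp only [Finset.mem_filter, Finset.mem_union, Finset.mem_filter]
  constructor
  · rintro ⟨(⟨h1, h2⟩ | ⟨h1, h2⟩), h3⟩
    · exact ⟨h1, h3⟩
    · omega
  · rintro ⟨h1, h3⟩
    exact ⟨Or.inl ⟨h1, by omega⟩, h3⟩

lemma cnt_swapAt_snd (s t : ℕ) (ht : t ≤ s) (AB : Finset (Fin m) × Finset (Fin m)) :
    cnt (swapAt s AB).2 t = cnt AB.2 t := by
  unfold cnt swapAt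
  congr 1
  ext i
  simp only [Finset.mem_filter, Finset.mem_union, Finset.mem_filter]
  constructor
  · rintro ⟨(⟨h1, h2⟩ | ⟨h1, h2⟩), h3⟩
    · exact ⟨h1, h3⟩
    · omega
  · rintro ⟨h1, h3⟩
    exact ⟨Or.inl ⟨h1, by omega⟩, h3⟩

lemma card_swapAt_fst (s : ℕ) (AB : Finset (Fin m) × Finset (Fin m)) :
    (swapAt s AB).1.card + cnt AB.2 s = cnt AB.1 s + AB.2.card := by
  unfold swapAt cnt
  rw [Finset.card_union_of_disjoint (by
    rw [Finset.disjoint_left]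
    intro i hi hi'
    simp only [Finset.mem_filter] at hi hi'
    omega)]
  have := Finset.card_filter_add_card_filter_not (s := AB.2) (fun i : Fin m => i.val < s)
  omega

lemma card_swapAt_snd (s : ℕ) (AB : Finset (Fin m) × Finset (Fin m)) :
    (swapAt s AB).2.card + cnt AB.1 s = cnt AB.2 s + AB.1.card := by
  unfold swapAt cnt
  rw [Finset.card_union_of_disjoint (by
    rw [Finset.disjoint_left]
    intro i hi hi'
    simp only [Finset.mem_filter] at hi hi'
    omega)]
  have := Finset.card_filter_add_card_filter_not (s := AB.1) (fun i : Fin m => i.val < s)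
  omega

/-- at the first violation point, B's count exceeds A's count by exactly one -/
lemma crossing {A B : Finset (Fin m)} (h : ∃ s, cnt A s < cnt B s) :
    cnt B (Nat.find h) = cnt A (Nat.find h) + 1 := by
  rcases hn : Nat.find h with _ | t
  · have hspec := Nat.find_spec h
    rw [hn] at hspec
    simp [cnt_zero] at hspec
  · have hspec := Nat.find_spec h
    rw [hn] at hspec
    have hmin : ¬ cnt A t < cnt B t := Nat.find_min h (by omega)
    have h1 := cnt_succ_le B t
    have h2 := cnt_mono A (by omega : t ≤ t + 1)
    omega

abbrev badSet (m a : ℕ) : Type :=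
  {AB : Finset (Fin m) × Finset (Fin m) // AB.1.card = a ∧ AB.2.card = a ∧ ¬ wdom AB.1 AB.2}

abbrev offSet (m b : ℕ) : Type :=
  {AB : Finset (Fin m) × Finset (Fin m) // AB.1.card = b ∧ AB.2.card = b + 2}

abbrev weakSet (m a : ℕ) : Type :=
  {AB : Finset (Fin m) × Finset (Fin m) // AB.1.card = a ∧ AB.2.card = a ∧ wdom AB.1 AB.2}

lemma find_swap_eq {AB : Finset (Fin m) × Finset (Fin m)}
    (h : ∃ s, cnt AB.1 s < cnt AB.2 s)
    (h' : ∃ s, cnt (swapAt (Nat.find h) AB).1 s < cnt (swapAt (Nat.find h) AB).2 s) :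
    Nat.find h' = Nat.find h := by
  apply le_antisymm
  · exact Nat.find_min' h' (by
      rw [cnt_swapAt_fst _ _ le_rfl, cnt_swapAt_snd _ _ le_rfl]
      exact Nat.find_spec h)
  · by_contra hlt
    push_neg at hlt
    have hs := Nat.find_spec h'
    rw [cnt_swapAt_fst _ _ (le_of_lt hlt), cnt_swapAt_snd _ _ (le_of_lt hlt)] at hs
    exact Nat.find_min h hlt hs

lemma exists_of_not_wdom {A B : Finset (Fin m)} (h : ¬ wdom A B) :
    ∃ s, cnt A s < cnt B s := by
  unfold wdom at h; push_neg at h; exact h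

def reflEquiv (m b : ℕ) : badSet m (b+1) ≃ offSet m b where
  toFun x :=
    have hv : ∃ s, cnt x.1.1 s < cnt x.1.2 s := exists_of_not_wdom x.2.2.2
    ⟨swapAt (Nat.find hv) x.1, by
      have hc := crossing hv
      have c1 := card_swapAt_fst (Nat.find hv) x.1
      have c2 := card_swapAt_snd (Nat.find hv) x.1
      have l1 := cnt_le_card x.1.1 (Nat.find hv)
      have l2 := cnt_le_card x.1.2 (Nat.find hv)
      have h1 := x.2.1
      have h2 := x.2.2.1
      omega⟩
  invFun y :=
    have hv : ∃ s, cnt y.1.1 s < cnt y.1.2 s :=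
      ⟨m, by
        have h1 := y.2.1
        have h2 := y.2.2
        rw [cnt_of_le _ le_rfl, cnt_of_le _ le_rfl]
        omega⟩
    ⟨swapAt (Nat.find hv) y.1, by
      have hc := crossing hv
      have c1 := card_swapAt_fst (Nat.find hv) y.1
      have c2 := card_swapAt_snd (Nat.find hv) y.1
      have l1 := cnt_le_card y.1.1 (Nat.find hv)
      have l2 := cnt_le_card y.1.2 (Nat.find hv)
      have h1 := y.2.1
      have h2 := y.2.2
      refine ⟨by omega, by omega, ?_⟩
      intro hw
      have hww := hw (Nat.find hv)
      rw [cnt_swapAt_fst _ _ le_rfl, cnt_swapAt_snd _ _ le_rfl] at hww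
      omega⟩
  left_inv x := by
    apply Subtype.ext
    show swapAt _ (swapAt _ x.1) = x.1
    rw [find_swap_eq, swapAt_swapAt]
  right_inv y := by
    apply Subtype.ext
    show swapAt _ (swapAt _ y.1) = y.1
    rw [find_swap_eq, swapAt_swapAt]

lemma card_subsets (m c : ℕ) :
    Nat.card {AB : Finset (Fin m) × Finset (Fin m) // AB.1.card = c ∧ AB.2.card = c + 2}
      = m.choose c * m.choose (c+2) := by
  rw [Nat.card_congr (Equiv.subtypeProdEquivProd
    (p := fun A : Finset (Fin m) => A.card = c) (q := fun B : Finset (Fin m) => B.card = c + 2))]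
  rw [Nat.card_prod, Nat.card_eq_fintype_card, Nat.card_eq_fintype_card,
    Fintype.card_finset_len, Fintype.card_finset_len, Fintype.card_fin]

lemma card_weak_add_bad (m a : ℕ) :
    Nat.card (weakSet m a) + Nat.card (badSet m a) = m.choose a * m.choose a := by
  rw [Nat.card_eq_fintype_card, Nat.card_eq_fintype_card]
  rw [Fintype.card_subtype, Fintype.card_subtype]
  have key := Finset.card_filter_add_card_filter_not
    (p := fun AB : Finset (Fin m) × Finset (Fin m) => wdom AB.1 AB.2)
    (s := Finset.univ.filter (fun AB : Finset (Fin m) × Finset (Fin m) =>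
      AB.1.card = a ∧ AB.2.card = a))
  rw [Finset.filter_filter, Finset.filter_filter] at key
  have e1 : Finset.univ.filter (fun AB : Finset (Fin m) × Finset (Fin m) =>
      AB.1.card = a ∧ AB.2.card = a ∧ wdom AB.1 AB.2)
      = Finset.univ.filter (fun AB : Finset (Fin m) × Finset (Fin m) =>
      (AB.1.card = a ∧ AB.2.card = a) ∧ wdom AB.1 AB.2) :=
    Finset.filter_congr (fun x _ => and_assoc.symm)
  have e2 : Finset.univ.filter (fun AB : Finset (Fin m) × Finset (Fin m) =>
      AB.1.card = a ∧ AB.2.card = a ∧ ¬ wdom AB.1 AB.2)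
      = Finset.univ.filter (fun AB : Finset (Fin m) × Finset (Fin m) =>
      (AB.1.card = a ∧ AB.2.card = a) ∧ ¬ wdom AB.1 AB.2) :=
    Finset.filter_congr (fun x _ => and_assoc.symm)
  rw [e1, e2, key]
  have : (Finset.univ.filter (fun AB : Finset (Fin m) × Finset (Fin m) =>
      AB.1.card = a ∧ AB.2.card = a)).card
      = Nat.card {AB : Finset (Fin m) × Finset (Fin m) // AB.1.card = a ∧ AB.2.card = a} := by
    rw [Nat.card_eq_fintype_card, Fintype.card_subtype]
  rw [this, Nat.card_congr (Equiv.subtypeProdEquivProd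
    (p := fun A : Finset (Fin m) => A.card = a) (q := fun B : Finset (Fin m) => B.card = a)),
    Nat.card_prod]
  simp [Nat.card_eq_fintype_card, Fintype.card_finset_len]

lemma card_weak_succ (m b : ℕ) :
    Nat.card (weakSet m (b+1)) + m.choose b * m.choose (b+2)
      = m.choose (b+1) * m.choose (b+1) := by
  have := card_weak_add_bad m (b+1)
  rwa [Nat.card_congr (reflEquiv m b), card_subsets] at this

lemma card_weak_zero (m : ℕ) : Nat.card (weakSet m 0) = 1 := by
  rw [Nat.card_eq_one_iff_unique]
  constructor
  · constructor
    intro x y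
    apply Subtype.ext
    have hx1 := Finset.card_eq_zero.mp x.2.1
    have hx2 := Finset.card_eq_zero.mp x.2.2.1
    have hy1 := Finset.card_eq_zero.mp y.2.1
    have hy2 := Finset.card_eq_zero.mp y.2.2.1
    exact Prod.ext (by rw [hx1, hy1]) (by rw [hx2, hy2])
  · exact ⟨⟨(∅, ∅), by simp [wdom, cnt]⟩⟩

abbrev goodSet (k a : ℕ) : Type :=
  {AB : Finset (Fin k) × Finset (Fin k) // AB.1.card = a ∧ AB.2.card = a ∧ sdom AB.1 AB.2}

def embLow (m : ℕ) : Fin m ↪ Fin (m+1) :=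
  ⟨fun α => ⟨α.1, by omega⟩, fun a b h => Fin.ext (by simpa [Fin.ext_iff] using h)⟩

def embHigh (m : ℕ) : Fin m ↪ Fin (m+1) :=
  ⟨fun β => ⟨β.1 + 1, by omega⟩, fun a b h => Fin.ext (by simpa [Fin.ext_iff] using h)⟩

def filterLow (A : Finset (Fin (m+1))) : Finset (Fin m) :=
  Finset.univ.filter (fun α : Fin m => embLow m α ∈ A)

def filterHigh (B : Finset (Fin (m+1))) : Finset (Fin m) :=
  Finset.univ.filter (fun β : Fin m => embHigh m β ∈ B)

lemma map_filterLow (A : Finset (Fin (m+1))) (hA : ∀ i ∈ A, i.val < m) :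
    (filterLow A).map (embLow m) = A := by
  ext i
  simp only [Finset.mem_map, filterLow, Finset.mem_filter, Finset.mem_univ, true_and]
  constructor
  · rintro ⟨α, hα, rfl⟩; exact hα
  · intro hi
    exact ⟨⟨i.1, hA i hi⟩, by simpa [embLow, Fin.ext_iff, DFunLike.coe] using hi, by simp [embLow, Fin.ext_iff, DFunLike.coe]⟩

lemma map_filterHigh (B : Finset (Fin (m+1))) (hB : ∀ i ∈ B, 0 < i.val) :
    (filterHigh B).map (embHigh m) = B := by
  ext i
  simp only [Finset.mem_map, filterHigh, Finset.mem_filter, Finset.mem_univ, true_and]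
  constructor
  · rintro ⟨β, hβ, rfl⟩; exact hβ
  · intro hi
    have h0 := hB i hi
    refine ⟨⟨i.1 - 1, by omega⟩, ?_, ?_⟩
    · convert hi using 2
      simp [embHigh, Fin.ext_iff, DFunLike.coe]; omega
    · simp [embHigh, Fin.ext_iff, DFunLike.coe]; omega

lemma filterLow_map (X : Finset (Fin m)) : filterLow (X.map (embLow m)) = X := by
  ext α
  simp only [filterLow, Finset.mem_filter, Finset.mem_univ, true_and, Finset.mem_map, embLow,
    Function.Embedding.coeFn_mk, Fin.ext_iff]
  constructor
  · rintro ⟨b, hb, he⟩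
    have : b = α := Fin.ext he
    rwa [← this]
  · intro h; exact ⟨α, h, rfl⟩

lemma filterHigh_map (X : Finset (Fin m)) : filterHigh (X.map (embHigh m)) = X := by
  ext β
  simp only [filterHigh, Finset.mem_filter, Finset.mem_univ, true_and, Finset.mem_map, embHigh,
    Function.Embedding.coeFn_mk, Fin.ext_iff, DFunLike.coe]
  constructor
  · rintro ⟨b, hb, he⟩
    have : b = β := Fin.ext (by omega)
    rwa [← this]
  · intro h; exact ⟨β, h, by omega⟩

lemma cnt_map_low (X : Finset (Fin m)) (t : ℕ) : cnt (X.map (embLow m)) t = cnt X t := by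
  unfold cnt
  rw [← Finset.card_map (embLow m) (s := X.filter (fun i => i.val < t))]
  congr 1
  ext i
  simp only [Finset.mem_filter, Finset.mem_map, embLow, Function.Embedding.coeFn_mk]
  constructor
  · rintro ⟨⟨α, hα, rfl⟩, h2⟩; exact ⟨α, ⟨hα, h2⟩, rfl⟩
  · rintro ⟨α, ⟨hα, h2⟩, rfl⟩; exact ⟨⟨α, hα, rfl⟩, h2⟩

lemma cnt_map_high (X : Finset (Fin m)) (t : ℕ) : cnt (X.map (embHigh m)) (t+1) = cnt X t := by
  unfold cnt
  rw [← Finset.card_map (embHigh m) (s := X.filter (fun i => i.val < t))]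
  congr 1
  ext i
  simp only [Finset.mem_filter, Finset.mem_map, embHigh, Function.Embedding.coeFn_mk]
  constructor
  · rintro ⟨⟨β, hβ, rfl⟩, h2⟩
    have h2' : (β : ℕ) + 1 < t + 1 := h2
    exact ⟨β, ⟨hβ, by omega⟩, rfl⟩
  · rintro ⟨β, ⟨hβ, h2⟩, rfl⟩
    refine ⟨⟨β, hβ, rfl⟩, ?_⟩
    show (β : ℕ) + 1 < t + 1
    omega

lemma sdom_top {m a : ℕ} {A B : Finset (Fin (m+1))} (h1 : A.card = a) (h2 : B.card = a)
    (hs : sdom A B) : ∀ i ∈ A, i.val < m := by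
  have hc1 : cnt A (m+1) = cnt A m + (if (⟨m, by omega⟩ : Fin (m+1)) ∈ A then 1 else 0) :=
    cnt_succ _ (by omega)
  have hc2 : cnt A (m+1) = a := by rw [cnt_of_le _ le_rfl, h1]
  have hc3 : cnt B (m+1) = a := by rw [cnt_of_le _ le_rfl, h2]
  have hc4 := hs m
  have hc5 := cnt_le_card A m
  rw [h1] at hc5
  have hnot : (⟨m, by omega⟩ : Fin (m+1)) ∉ A := by
    intro hmem
    rw [if_pos hmem] at hc1
    omega
  intro i hi
  have hne : i ≠ (⟨m, by omega⟩ : Fin (m+1)) := fun he => hnot (he ▸ hi)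
  have hlt : (i : ℕ) < m + 1 := i.2
  have : (i : ℕ) ≠ m := fun hv => hne (Fin.ext hv)
  omega

lemma sdom_bot {m : ℕ} {A B : Finset (Fin (m+1))} (hs : sdom A B) : ∀ i ∈ B, 0 < i.val := by
  have hc1 : cnt B 1 = cnt B 0 + (if (⟨0, by omega⟩ : Fin (m+1)) ∈ B then 1 else 0) :=
    cnt_succ _ (by omega)
  have hc4' := hs 0
  have hc4 : cnt B 1 ≤ cnt A 0 := hc4'
  rw [cnt_zero] at hc1 hc4
  have hnot : (⟨0, by omega⟩ : Fin (m+1)) ∉ B := by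
    intro hmem
    rw [if_pos hmem] at hc1
    omega
  intro i hi
  have hne : i ≠ (⟨0, by omega⟩ : Fin (m+1)) := fun he => hnot (he ▸ hi)
  have : (i : ℕ) ≠ 0 := fun hv => hne (Fin.ext hv)
  omega

/-- The shift equivalence between strict-domination pairs in `Fin (m+1)` and
weak-domination pairs in `Fin m`. -/
def shiftEquiv (m a : ℕ) : weakSet m a ≃ goodSet (m+1) a where
  toFun x :=
    ⟨(x.1.1.map (embLow m), x.1.2.map (embHigh m)), by
      obtain ⟨h1, h2, hw⟩ := x.2
      refine ⟨by rwa [Finset.card_map], by rwa [Finset.card_map], ?_⟩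
      intro r
      show cnt (x.1.2.map (embHigh m)) (r+1) ≤ cnt (x.1.1.map (embLow m)) r
      rcases le_or_gt r m with hr | hr
      · rw [cnt_map_high, cnt_map_low]
        exact hw r
      · rw [cnt_of_le _ (by omega), cnt_of_le _ (by omega), Finset.card_map, Finset.card_map,
          h1, h2]⟩
  invFun y :=
    ⟨(filterLow y.1.1, filterHigh y.1.2), by
      obtain ⟨h1, h2, hs⟩ := y.2
      have hAtop := sdom_top h1 h2 hs
      have hB0 := sdom_bot hs
      have e1 : (filterLow y.1.1).map (embLow m) = y.1.1 := map_filterLow _ hAtop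
      have e2 : (filterHigh y.1.2).map (embHigh m) = y.1.2 := map_filterHigh _ hB0
      refine ⟨?_, ?_, ?_⟩
      · show (filterLow y.1.1).card = a
        rw [← Finset.card_map (f := embLow m), e1, h1]
      · show (filterHigh y.1.2).card = a
        rw [← Finset.card_map (f := embHigh m), e2, h2]
      · intro s
        have l1 : cnt (filterLow y.1.1) s = cnt y.1.1 s := by
          rw [← cnt_map_low (filterLow y.1.1) s, e1]
        have l2 : cnt (filterHigh y.1.2) s = cnt y.1.2 (s+1) := by
          rw [← cnt_map_high (filterHigh y.1.2) s, e2]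
        rw [l1, l2]
        exact hs s⟩
  left_inv x := by
    apply Subtype.ext
    show (filterLow _, filterHigh _) = x.1
    rw [filterLow_map, filterHigh_map]
  right_inv y := by
    apply Subtype.ext
    show ((filterLow y.1.1).map (embLow m), (filterHigh y.1.2).map (embHigh m)) = y.1
    obtain ⟨h1, h2, hs⟩ := y.2
    rw [map_filterLow _ (sdom_top h1 h2 hs), map_filterHigh _ (sdom_bot hs)]

lemma card_weak_eq (m a : ℕ) :
    Nat.card (weakSet m a) = (m+1).choose a * m.choose a / (a + 1) := by
  cases a with
  | zero => rw [card_weak_zero]; simp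
  | succ b =>
    rcases le_or_gt (b+1) m with hbm | hbm
    · have h1 := card_weak_succ m b
      have h2 := choose_id m b hbm
      have h3 : (b+2) * (Nat.card (weakSet m (b+1)) + m.choose b * m.choose (b+2))
          = (b+2) * (m.choose (b+1) * m.choose (b+1)) := by rw [h1]
      rw [Nat.mul_add, h2] at h3
      have h4 := Nat.add_right_cancel h3
      symm
      apply Nat.div_eq_of_eq_mul_left (by omega : 0 < b + 1 + 1)
      rw [← h4]
      ring
    · have h1 := card_weak_add_bad m (b+1)
      rw [Nat.choose_eq_zero_of_lt hbm] at h1 ⊢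
      simp only [Nat.mul_zero, Nat.zero_mul, Nat.zero_div]
      omega

lemma card_good (k a : ℕ) :
    Nat.card (goodSet k a) = k.choose a * (k-1).choose a / (a+1) := by
  cases k with
  | zero =>
    cases a with
    | zero =>
      have hr : (Nat.choose 0 0 * (0 - 1).choose 0 / (0 + 1)) = 1 := by norm_num
      rw [hr, Nat.card_eq_one_iff_unique]
      constructor
      · constructor
        intro x y
        apply Subtype.ext
        apply Prod.ext
        · rw [Finset.card_eq_zero.mp x.2.1, Finset.card_eq_zero.mp y.2.1]
        · rw [Finset.card_eq_zero.mp x.2.2.1, Finset.card_eq_zero.mp y.2.2.1]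
      · exact ⟨⟨(∅, ∅), by simp [sdom, cnt]⟩⟩
    | succ b =>
      have : IsEmpty (goodSet 0 (b+1)) := by
        constructor
        intro x
        have h1 := x.2.1
        have hempty : x.1.1 = ∅ := Finset.eq_empty_of_isEmpty x.1.1
        rw [hempty] at h1
        simp at h1
      rw [Nat.card_of_isEmpty]
      rw [Nat.choose_eq_zero_of_lt (by omega)]
      simp
  | succ m =>
    rw [Nat.card_congr (shiftEquiv m a).symm, card_weak_eq]
    simp

section Ballot
variable {k : ℕ}

def fext (f : Fin (2*k) → ℤ) : ℕ → ℤ := fun n => if h : n < 2*k then f ⟨n, h⟩ else 0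

lemma sum_prefix (f : Fin (2*k) → ℤ) (j : Fin (2*k)) :
    ∑ i ∈ Finset.univ.filter (fun i => i ≤ j), f i = ∑ n ∈ Finset.range (j.1+1), fext f n := by
  rw [Finset.sum_filter]
  have h1 : ∑ i : Fin (2*k), (if i ≤ j then f i else 0)
      = ∑ n ∈ Finset.range (2*k), (if h : n < 2*k then (if n ≤ j.1 then f ⟨n, h⟩ else 0) else 0) := by
    rw [← Fin.sum_univ_eq_sum_range]
    apply Finset.sum_congr rfl
    intro i _
    rw [dif_pos i.2]
    congr 1
  rw [h1]
  symm
  rw [Finset.sum_congr rfl (g := fun n =>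
      (if h : n < 2*k then (if n ≤ j.1 then f ⟨n, h⟩ else 0) else 0)) (by
    intro n hn
    rw [Finset.mem_range] at hn
    have hn2 : n < 2*k := by have := j.2; omega
    show fext f n = if h : n < 2*k then (if n ≤ j.1 then f ⟨n, h⟩ else 0) else 0
    rw [fext, dif_pos hn2, dif_pos hn2, if_pos (by omega : n ≤ j.1)])]
  apply Finset.sum_subset
  · intro n hn
    rw [Finset.mem_range] at hn ⊢
    have := j.2; omega
  · intro n _ hn
    rw [Finset.mem_range] at hn
    split
    · rw [if_neg (by omega)]
    · rfl

lemma sum_univ_fin (f : Fin (2*k) → ℤ) :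
    ∑ i, f i = ∑ n ∈ Finset.range (2*k), fext f n := by
  rw [← Fin.sum_univ_eq_sum_range]
  apply Finset.sum_congr rfl
  intro i _
  rw [fext, dif_pos i.2]

def xval (x : Fin (2*k) → Bool) : Fin (2*k) → ℤ := fun i => if x i then 1 else -1

def SX (x : Fin (2*k) → Bool) (n : ℕ) : ℤ := ∑ i ∈ Finset.range n, fext (xval x) i

def setA (x : Fin (2*k) → Bool) : Finset (Fin k) :=
  Finset.univ.filter (fun α => x ⟨2*α.1+1, by have := α.2; omega⟩ = true)

def setB (x : Fin (2*k) → Bool) : Finset (Fin k) :=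
  Finset.univ.filter (fun β => x ⟨2*β.1, by have := β.2; omega⟩ = false)

lemma mem_setA {x : Fin (2*k) → Bool} {α : Fin k} {i : Fin (2*k)} (hv : (i:ℕ) = 2*α.1+1) :
    α ∈ setA x ↔ x i = true := by
  have he : i = ⟨2*α.1+1, by have := α.2; omega⟩ := Fin.ext hv
  rw [he]
  simp [setA]

lemma mem_setB {x : Fin (2*k) → Bool} {β : Fin k} {i : Fin (2*k)} (hv : (i:ℕ) = 2*β.1) :
    β ∈ setB x ↔ x i = false := by
  have he : i = ⟨2*β.1, by have := β.2; omega⟩ := Fin.ext hv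
  rw [he]
  simp [setB]

lemma SX_formula (x : Fin (2*k) → Bool) :
    ∀ r : ℕ, r ≤ k →
      (SX x (2*r) = 2*(cnt (setA x) r : ℤ) - 2*(cnt (setB x) r)) ∧
      (r < k → SX x (2*r+1) = 2*(cnt (setA x) r : ℤ) - 2*(cnt (setB x) (r+1)) + 1) := by
  intro r
  induction r with
  | zero =>
    intro _
    constructor
    · simp [SX, cnt_zero]
    · intro hk
      have h0 : (0:ℕ) < 2*k := by omega
      have hs : SX x (2*0+1) = fext (xval x) 0 := by
        simp [SX, Finset.sum_range_one]
      have hf0 : fext (xval x) 0 = (if x ⟨0, h0⟩ then (1:ℤ) else -1) := by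
        rw [fext, dif_pos h0]; rfl
      have hcb : cnt (setB x) 1 = cnt (setB x) 0
          + (if (⟨0, hk⟩ : Fin k) ∈ setB x then 1 else 0) := cnt_succ _ hk
      rw [cnt_zero] at hcb
      have hmem : (⟨0, hk⟩ : Fin k) ∈ setB x ↔ x ⟨0, h0⟩ = false := mem_setB rfl
      rw [hs, hf0, cnt_zero]
      rcases hx : x ⟨0, h0⟩ with _ | _
      · rw [if_pos (hmem.mpr hx)] at hcb
        rw [hcb]
        norm_num
      · rw [if_neg (fun hm => by
          have h1 := hmem.mp hm
          rw [hx] at h1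
          exact absurd h1 (by decide))] at hcb
        rw [hcb]
        norm_num
  | succ r ih =>
    intro h
    obtain ⟨ih1, ih2⟩ := ih (by omega)
    have hrk : r < k := by omega
    have hi1 : (2*r+1) < 2*k := by omega
    have he2 : SX x (2*(r+1)) = SX x (2*r+1) + fext (xval x) (2*r+1) := by
      have h2 : 2*(r+1) = (2*r+1) + 1 := by ring
      rw [h2, SX, Finset.sum_range_succ]
      rfl
    have hf1 : fext (xval x) (2*r+1) = (if x ⟨2*r+1, hi1⟩ then (1:ℤ) else -1) := by
      rw [fext, dif_pos hi1]; rfl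
    have hca : cnt (setA x) (r+1) = cnt (setA x) r
        + (if (⟨r, hrk⟩ : Fin k) ∈ setA x then 1 else 0) := cnt_succ _ hrk
    have hmemA : (⟨r, hrk⟩ : Fin k) ∈ setA x ↔ x ⟨2*r+1, hi1⟩ = true := mem_setA rfl
    have part1 : SX x (2*(r+1)) = 2*(cnt (setA x) (r+1) : ℤ) - 2*(cnt (setB x) (r+1)) := by
      rw [he2, ih2 hrk, hf1, hca]
      rcases hx : x ⟨2*r+1, hi1⟩ with _ | _
      · have hne : (⟨r, hrk⟩ : Fin k) ∉ setA x := fun hm => by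
          have h1 := hmemA.mp hm
          rw [hx] at h1
          exact absurd h1 (by decide)
        rw [if_neg hne]
        norm_num
        try push_cast
        try ring
      · rw [if_pos (hmemA.mpr hx)]
        norm_num
        try push_cast
        try ring
    refine ⟨part1, ?_⟩
    intro hk1
    have hi2 : (2*(r+1)) < 2*k := by omega
    have he3 : SX x (2*(r+1)+1) = SX x (2*(r+1)) + fext (xval x) (2*(r+1)) := by
      rw [SX, Finset.sum_range_succ]
      rfl
    have hf2 : fext (xval x) (2*(r+1)) = (if x ⟨2*(r+1), hi2⟩ then (1:ℤ) else -1) := by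
      rw [fext, dif_pos hi2]; rfl
    have hcb : cnt (setB x) (r+1+1) = cnt (setB x) (r+1)
        + (if (⟨r+1, hk1⟩ : Fin k) ∈ setB x then 1 else 0) := cnt_succ _ hk1
    have hmemB : (⟨r+1, hk1⟩ : Fin k) ∈ setB x ↔ x ⟨2*(r+1), hi2⟩ = false := mem_setB rfl
    rw [he3, part1, hf2, hcb]
    rcases hx : x ⟨2*(r+1), hi2⟩ with _ | _
    · rw [if_pos (hmemB.mpr hx)]
      norm_num
      try push_cast
      try ring
    · have hne : (⟨r+1, hk1⟩ : Fin k) ∉ setB x := fun hm => by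
        have h1 := hmemB.mp hm
        rw [hx] at h1
        exact absurd h1 (by decide)
      rw [if_neg hne]
      norm_num
      try push_cast
      try ring

lemma card_oddA (x : Fin (2*k) → Bool) :
    (Finset.univ.filter (fun i : Fin (2*k) => x i = true ∧ Odd i.1)).card = (setA x).card := by
  refine Finset.card_bij' (fun i _ => (⟨i.1/2, by have := i.2; omega⟩ : Fin k))
    (fun α _ => (⟨2*α.1+1, by have := α.2; omega⟩ : Fin (2*k))) ?hi ?hj ?li ?ri
  case hi =>
    intro i hi
    have hodd : (i:ℕ) % 2 = 1 := Nat.odd_iff.mp (Finset.mem_filter.mp hi).2.2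
    exact (mem_setA (α := ⟨(i:ℕ)/2, by have := i.2; omega⟩)
      (show (i:ℕ) = 2*((i:ℕ)/2)+1 by omega)).mpr (Finset.mem_filter.mp hi).2.1
  case hj =>
    intro α hα
    rw [Finset.mem_filter]
    refine ⟨Finset.mem_univ _, (mem_setA rfl).mp hα, ?_⟩
    rw [Nat.odd_iff]
    show (2*(α:ℕ)+1) % 2 = 1
    omega
  case li =>
    intro i hi
    have hodd : (i:ℕ) % 2 = 1 := Nat.odd_iff.mp (Finset.mem_filter.mp hi).2.2
    exact Fin.ext (show 2*((i:ℕ)/2)+1 = (i:ℕ) by omega)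
  case ri =>
    intro α _
    exact Fin.ext (show (2*(α:ℕ)+1)/2 = (α:ℕ) by omega)

lemma card_evenT (x : Fin (2*k) → Bool) :
    (Finset.univ.filter (fun i : Fin (2*k) => x i = true ∧ Even i.1)).card + (setB x).card = k := by
  have h1 : (Finset.univ.filter (fun i : Fin (2*k) => x i = true ∧ Even i.1)).card
      = (Finset.univ.filter (fun β : Fin k =>
          x ⟨2*β.1, by have := β.2; omega⟩ = true)).card := by
    refine Finset.card_bij' (fun i _ => (⟨i.1/2, by have := i.2; omega⟩ : Fin k))
      (fun β _ => (⟨2*β.1, by have := β.2; omega⟩ : Fin (2*k))) ?hi ?hj ?li ?ri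
    case hi =>
      intro i hi
      obtain ⟨_, hx, heven⟩ := Finset.mem_filter.mp hi
      rw [Nat.even_iff] at heven
      rw [Finset.mem_filter]
      refine ⟨Finset.mem_univ _, ?_⟩
      have he : (⟨2*((i:ℕ)/2), by have := i.2; omega⟩ : Fin (2*k)) = i :=
        Fin.ext (show 2*((i:ℕ)/2) = (i:ℕ) by omega)
      rw [he]
      exact hx
    case hj =>
      intro β hβ
      rw [Finset.mem_filter]
      refine ⟨Finset.mem_univ _, (Finset.mem_filter.mp hβ).2, ?_⟩
      rw [Nat.even_iff]
      show (2*(β:ℕ)) % 2 = 0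
      omega
    case li =>
      intro i hi
      have heven : (i:ℕ) % 2 = 0 := Nat.even_iff.mp (Finset.mem_filter.mp hi).2.2
      exact Fin.ext (show 2*((i:ℕ)/2) = (i:ℕ) by omega)
    case ri =>
      intro β _
      exact Fin.ext (show (2*(β:ℕ))/2 = (β:ℕ) by omega)
  rw [h1]
  have h2 : setB x = Finset.univ.filter (fun β : Fin k =>
      ¬ (x ⟨2*β.1, by have := β.2; omega⟩ = true)) := by
    apply Finset.filter_congr
    intro β _
    simp
  rw [h2]
  rw [Finset.card_filter_add_card_filter_not]
  simp

lemma master {k a : ℕ} (ha : a ≤ k) (x : Fin (2*k) → Bool) :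
    (IsBallot k x ∧
      (Finset.univ.filter (fun i => x i = true ∧ Odd i.1)).card = a ∧
      (Finset.univ.filter (fun i => x i = true ∧ Even i.1)).card = k - a)
    ↔ ((setA x).card = a ∧ (setB x).card = a ∧ sdom (setA x) (setB x)) := by
  have hBk : (setB x).card ≤ k := by
    have := Finset.card_le_card (Finset.subset_univ (setB x))
    simpa using this
  constructor
  · rintro ⟨⟨hpre, htot⟩, hodd, heven⟩
    have hA : (setA x).card = a := by rw [← card_oddA]; exact hodd
    have hB : (setB x).card = a := by
      have := card_evenT x
      omega
    refine ⟨hA, hB, ?_⟩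
    intro r
    rcases lt_or_ge r k with hr | hr
    · have hj : 2*r < 2*k := by omega
      have h := hpre ⟨2*r, hj⟩
      rw [sum_prefix] at h
      have hS : (0:ℤ) ≤ SX x (2*r+1) := h
      have hf := ((SX_formula x r (by omega)).2) hr
      have c1 : (cnt (setB x) (r+1) : ℤ) ≤ (cnt (setA x) r : ℤ) := by omega
      exact_mod_cast c1
    · rw [cnt_of_le _ (by omega), cnt_of_le _ hr, hA, hB]
  · rintro ⟨hA, hB, hs⟩
    have htot' : SX x (2*k) = 0 := by
      have hf := (SX_formula x k le_rfl).1
      rw [cnt_of_le _ le_rfl, cnt_of_le _ le_rfl, hA, hB] at hf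
      omega
    refine ⟨⟨?_, ?_⟩, ?_, ?_⟩
    · intro j
      rw [sum_prefix]
      show (0:ℤ) ≤ SX x (j.1+1)
      rcases Nat.even_or_odd j.1 with hpar | hpar
      · obtain ⟨r, hjr⟩ := hpar
        have hrk : r < k := by have := j.2; omega
        have he : (j:ℕ) + 1 = 2*r + 1 := by omega
        rw [he]
        have hf := ((SX_formula x r (by omega)).2) hrk
        have hd := hs r
        have hd' : (cnt (setB x) (r+1) : ℤ) ≤ (cnt (setA x) r : ℤ) := by exact_mod_cast hd
        omega
      · obtain ⟨r, hjr⟩ := hpar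
        have hrk : r + 1 ≤ k := by have := j.2; omega
        have he : (j:ℕ) + 1 = 2*(r+1) := by omega
        rw [he]
        have hf := (SX_formula x (r+1) hrk).1
        have hd := hs r
        have hmo := cnt_mono (setA x) (by omega : r ≤ r+1)
        have hd' : (cnt (setB x) (r+1) : ℤ) ≤ (cnt (setA x) (r+1) : ℤ) := by
          exact_mod_cast le_trans hd hmo
        omega
    · rw [sum_univ_fin]
      exact htot'
    · rw [card_oddA]
      exact hA
    · have := card_evenT x
      omega

def mkx (AB : Finset (Fin k) × Finset (Fin k)) : Fin (2*k) → Bool :=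
  fun i => if i.1 % 2 = 1 then decide ((⟨i.1/2, by have := i.2; omega⟩ : Fin k) ∈ AB.1)
           else !decide ((⟨i.1/2, by have := i.2; omega⟩ : Fin k) ∈ AB.2)

lemma setA_mkx (AB : Finset (Fin k) × Finset (Fin k)) : setA (mkx AB) = AB.1 := by
  ext α
  rw [mem_setA (i := ⟨2*α.1+1, by have := α.2; omega⟩) rfl, mkx]
  have h1 : (2*α.1+1) % 2 = 1 := by omega
  rw [if_pos h1]
  have h2 : (⟨(2*α.1+1)/2, by have := α.2; omega⟩ : Fin k) = α :=
    Fin.ext (show (2*(α:ℕ)+1)/2 = (α:ℕ) by omega)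
  rw [h2]
  simp

lemma setB_mkx (AB : Finset (Fin k) × Finset (Fin k)) : setB (mkx AB) = AB.2 := by
  ext β
  rw [mem_setB (i := ⟨2*β.1, by have := β.2; omega⟩) rfl, mkx]
  have h1 : ¬ ((2*β.1) % 2 = 1) := by omega
  rw [if_neg h1]
  have h2 : (⟨(2*β.1)/2, by have := β.2; omega⟩ : Fin k) = β :=
    Fin.ext (show (2*(β:ℕ))/2 = (β:ℕ) by omega)
  rw [h2]
  simp

lemma mkx_setAB (x : Fin (2*k) → Bool) : mkx (setA x, setB x) = x := by
  funext i
  rw [mkx]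
  rcases Nat.even_or_odd i.1 with hpar | hpar
  · rw [Nat.even_iff] at hpar
    rw [if_neg (by omega)]
    have hm := mem_setB (x := x) (β := ⟨i.1/2, by have := i.2; omega⟩) (i := i)
      (show (i:ℕ) = 2*((i:ℕ)/2) by omega)
    rcases hx : x i with _ | _
    · simp [hm.mpr hx]
    · have : (⟨(i:ℕ)/2, by have := i.2; omega⟩ : Fin k) ∉ setB x := fun hmem => by
        have h1 := hm.mp hmem
        rw [hx] at h1
        exact absurd h1 (by decide)
      simp [this]
  · rw [Nat.odd_iff] at hpar
    rw [if_pos hpar]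
    have hm := mem_setA (x := x) (α := ⟨i.1/2, by have := i.2; omega⟩) (i := i)
      (show (i:ℕ) = 2*((i:ℕ)/2)+1 by omega)
    rcases hx : x i with _ | _
    · have : (⟨(i:ℕ)/2, by have := i.2; omega⟩ : Fin k) ∉ setA x := fun hmem => by
        have h1 := hm.mp hmem
        rw [hx] at h1
        exact absurd h1 (by decide)
      simp [this]
    · simp [hm.mpr hx]

/-- the equivalence between ballot sequences and domination pairs -/
def ballotEquiv (k a : ℕ) (ha : a ≤ k) :
    {x : Fin (2*k) → Bool // IsBallot k x ∧
      (Finset.univ.filter (fun i => x i = true ∧ Odd i.1)).card = a ∧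
      (Finset.univ.filter (fun i => x i = true ∧ Even i.1)).card = k - a}
    ≃ goodSet k a where
  toFun x := ⟨(setA x.1, setB x.1), (master ha x.1).mp x.2⟩
  invFun y := ⟨mkx y.1, (master ha (mkx y.1)).mpr (by
    rw [setA_mkx, setB_mkx]
    exact y.2)⟩
  left_inv x := by
    apply Subtype.ext
    show mkx (setA x.1, setB x.1) = x.1
    exact mkx_setAB x.1
  right_inv y := by
    apply Subtype.ext
    show (setA (mkx y.1), setB (mkx y.1)) = y.1
    rw [setA_mkx, setB_mkx]

end Ballot

section Motzkin
variable {k : ℕ}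

def qval (p : Fin (2*k) → Fin 3) : Fin (2*k) → ℤ := fun i => (p i : ℤ) - 1

def SQ (p : Fin (2*k) → Fin 3) (n : ℕ) : ℤ := ∑ i ∈ Finset.range n, fext (qval p) i

def xofp (p : Fin (2*k) → Fin 3) : Fin (2*k) → Bool :=
  fun i => if (i:ℕ) % 2 = 1 then decide (p i = 2) else decide (p i = 1)

def pofx (x : Fin (2*k) → Bool) : Fin (2*k) → Fin 3 :=
  fun i => if (i:ℕ) % 2 = 1 then (if x i then 2 else 1) else (if x i then 1 else 0)

/-- alternation property -/
def Alt (p : Fin (2*k) → Fin 3) : Prop :=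
  ∀ i, ((p i : ℤ) - 1 = 1 → Odd i.1) ∧ ((p i : ℤ) - 1 = -1 → Even i.1)

lemma pval3 (p : Fin (2*k) → Fin 3) (i : Fin (2*k)) :
    (p i).1 = 0 ∨ (p i).1 = 1 ∨ (p i).1 = 2 := by
  have := (p i).isLt
  omega

lemma qcast (p : Fin (2*k) → Fin 3) (i : Fin (2*k)) : (p i : ℤ) = ((p i).1 : ℤ) := rfl

lemma peq2 {p : Fin (2*k) → Fin 3} {i : Fin (2*k)} : p i = 2 ↔ (p i).1 = 2 := by
  rw [Fin.ext_iff]; rfl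

lemma peq1 {p : Fin (2*k) → Fin 3} {i : Fin (2*k)} : p i = 1 ↔ (p i).1 = 1 := by
  rw [Fin.ext_iff]; rfl

lemma xval_xofp {p : Fin (2*k) → Fin 3} (halt : Alt p) (i : Fin (2*k)) :
    (if xofp p i then (1:ℤ) else -1)
      = 2*((p i : ℤ) - 1) + (if (i:ℕ) % 2 = 1 then -1 else 1) := by
  rcases pval3 p i with hv | hv | hv <;>
    rcases Nat.even_or_odd i.1 with hpar | hpar
  · -- val 0, even: q = -1, xofp = decide (p i = 1) = false
    have hpar' : ¬ ((i:ℕ) % 2 = 1) := by rw [Nat.even_iff] at hpar; omega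
    have hne : ¬ (p i = 1) := fun h => by rw [peq1] at h; omega
    rw [xofp, if_neg hpar', if_neg hpar', decide_eq_false hne]
    rw [qcast, hv]
    norm_num
  · -- val 0, odd: contradiction with halt
    exfalso
    have := (halt i).2 (by rw [qcast, hv]; norm_num)
    rw [Nat.even_iff] at this
    rw [Nat.odd_iff] at hpar
    omega
  · -- val 1, even: q = 0, xofp = decide (p i = 1) = true
    have hpar' : ¬ ((i:ℕ) % 2 = 1) := by rw [Nat.even_iff] at hpar; omega
    have heq : p i = 1 := peq1.mpr hv
    rw [xofp, if_neg hpar', if_neg hpar', decide_eq_true heq]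
    rw [qcast, hv]
    norm_num
  · -- val 1, odd: q = 0, xofp = decide (p i = 2) = false
    rw [Nat.odd_iff] at hpar
    have hne : ¬ (p i = 2) := fun h => by rw [peq2] at h; omega
    rw [xofp, if_pos hpar, if_pos hpar, decide_eq_false hne]
    rw [qcast, hv]
    norm_num
  · -- val 2, even: contradiction
    exfalso
    have := (halt i).1 (by rw [qcast, hv]; norm_num)
    rw [Nat.even_iff] at hpar
    rw [Nat.odd_iff] at this
    omega
  · -- val 2, odd
    rw [Nat.odd_iff] at hpar
    have heq : p i = 2 := peq2.mpr hv
    rw [xofp, if_pos hpar, if_pos hpar, decide_eq_true heq]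
    rw [qcast, hv]
    norm_num

lemma SX_SQ {p : Fin (2*k) → Fin 3} (halt : Alt p) :
    ∀ n, n ≤ 2*k → SX (xofp p) n = 2 * SQ p n + (if n % 2 = 1 then 1 else 0) := by
  intro n
  induction n with
  | zero => intro _; simp [SX, SQ]
  | succ n ih =>
    intro hn
    have ihn := ih (by omega)
    have hlt : n < 2*k := by omega
    have h1 : SX (xofp p) (n+1) = SX (xofp p) n + fext (xval (xofp p)) n := by
      rw [SX, Finset.sum_range_succ]; rfl
    have h2 : SQ p (n+1) = SQ p n + fext (qval p) n := by
      rw [SQ, Finset.sum_range_succ]; rfl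
    have h3 : fext (xval (xofp p)) n = (if xofp p ⟨n, hlt⟩ then (1:ℤ) else -1) := by
      rw [fext, dif_pos hlt]; rfl
    have h4 : fext (qval p) n = (p ⟨n, hlt⟩ : ℤ) - 1 := by
      rw [fext, dif_pos hlt]; rfl
    have h5 := xval_xofp halt ⟨n, hlt⟩
    rw [h1, h2, h3, h4, ihn, h5]
    show _ = 2 * (SQ p n + ((p ⟨n, hlt⟩ : ℤ) - 1)) + _
    have hval : ((⟨n, hlt⟩ : Fin (2*k)) : ℕ) = n := rfl
    rw [hval]
    rcases Nat.even_or_odd n with hpar | hpar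
    · rw [Nat.even_iff] at hpar
      rw [if_neg (by omega : ¬ (n % 2 = 1)), if_neg (by omega : ¬ (n % 2 = 1)),
        if_pos (by omega : (n+1) % 2 = 1)]
      ring
    · rw [Nat.odd_iff] at hpar
      rw [if_pos hpar, if_pos hpar, if_neg (by omega : ¬ ((n+1) % 2 = 1))]
      ring

lemma riseset {p : Fin (2*k) → Fin 3} (halt : Alt p) :
    Finset.univ.filter (fun i => (p i : ℤ) - 1 = 1)
      = Finset.univ.filter (fun i => xofp p i = true ∧ Odd i.1) := by
  apply Finset.filter_congr
  intro i _
  constructor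
  · intro hq
    have hodd := (halt i).1 hq
    refine ⟨?_, hodd⟩
    rw [Nat.odd_iff] at hodd
    rw [xofp, if_pos hodd, decide_eq_true_eq, peq2]
    rw [qcast] at hq
    omega
  · rintro ⟨hx, hodd⟩
    rw [Nat.odd_iff] at hodd
    rw [xofp, if_pos hodd, decide_eq_true_eq, peq2] at hx
    rw [qcast, hx]
    norm_num

lemma sum_pm (p : Fin (2*k) → Fin 3) :
    ∑ i, ((p i : ℤ) - 1)
      = ((Finset.univ.filter (fun i => (p i : ℤ) - 1 = 1)).card : ℤ)
        - ((Finset.univ.filter (fun i => (p i : ℤ) - 1 = -1)).card : ℤ) := by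
  have h1 : ∀ i : Fin (2*k), (p i : ℤ) - 1
      = (if (p i : ℤ) - 1 = 1 then (1:ℤ) else 0) - (if (p i : ℤ) - 1 = -1 then (1:ℤ) else 0) := by
    intro i
    rcases pval3 p i with hv | hv | hv <;> rw [qcast, hv] <;> norm_num
  rw [Finset.sum_congr rfl (fun i _ => h1 i), Finset.sum_sub_distrib]
  congr 1 <;> rw [Finset.sum_boole]

lemma setB_falls {p : Fin (2*k) → Fin 3} (halt : Alt p) :
    (setB (xofp p)).card = (Finset.univ.filter (fun i => (p i : ℤ) - 1 = -1)).card := by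
  refine Finset.card_bij' (fun β _ => (⟨2*β.1, by have := β.2; omega⟩ : Fin (2*k)))
    (fun i _ => (⟨i.1/2, by have := i.2; omega⟩ : Fin k)) ?hi ?hj ?li ?ri
  case hi =>
    intro β hβ
    have hx := (mem_setB (i := ⟨2*β.1, by have := β.2; omega⟩) rfl).mp hβ
    rw [Finset.mem_filter]
    refine ⟨Finset.mem_univ _, ?_⟩
    set j : Fin (2*k) := ⟨2*β.1, by have := β.2; omega⟩ with hj
    have hpar : (j:ℕ) % 2 = 0 := by show (2*(β:ℕ)) % 2 = 0; omega
    rw [xofp, if_neg (by omega)] at hx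
    have hne1 : ¬ (p j = 1) := by
      intro h
      rw [decide_eq_true h] at hx
      exact absurd hx (by decide)
    have hne2 : (p j).1 ≠ 2 := by
      intro h
      have hodd := (halt j).1 (by rw [qcast, h]; norm_num)
      rw [Nat.odd_iff] at hodd
      omega
    rcases pval3 p j with hv | hv | hv
    · rw [qcast, hv]; norm_num
    · exact absurd (peq1.mpr hv) hne1
    · exact absurd hv hne2
  case hj =>
    intro i hi
    have hq := (Finset.mem_filter.mp hi).2
    have heven := (halt i).2 hq
    rw [Nat.even_iff] at heven
    have hv : (p i).1 = 0 := by rw [qcast] at hq; omega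
    refine (mem_setB (β := ⟨(i:ℕ)/2, by have := i.2; omega⟩)
      (show (i:ℕ) = 2*((i:ℕ)/2) by omega)).mpr ?_
    rw [xofp, if_neg (by omega)]
    have hne1 : ¬ (p i = 1) := fun h => by rw [peq1] at h; omega
    rw [decide_eq_false hne1]
  case li =>
    intro β _
    exact Fin.ext (show (2*(β:ℕ))/2 = (β:ℕ) by omega)
  case ri =>
    intro i hi
    have hq := (Finset.mem_filter.mp hi).2
    have heven := (halt i).2 hq
    rw [Nat.even_iff] at heven
    exact Fin.ext (show 2*((i:ℕ)/2) = (i:ℕ) by omega)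

end Motzkin

section MotzkinEquiv
variable {k : ℕ}

lemma masterMB {a : ℕ} (p : Fin (2*k) → Fin 3) (halt : Alt p) :
    (IsAltMotzkin k p ∧ (Finset.univ.filter (fun i => (p i : ℤ) - 1 = 1)).card = a)
    ↔ (IsBallot k (xofp p) ∧
        (Finset.univ.filter (fun i => xofp p i = true ∧ Odd i.1)).card = a ∧
        (Finset.univ.filter (fun i => xofp p i = true ∧ Even i.1)).card = k - a) := by
  constructor
  · rintro ⟨⟨_, hpre, htot⟩, hcard⟩
    have htotq : SQ p (2*k) = 0 := by
      rw [sum_univ_fin] at htot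
      exact htot
    have hfalls : (setB (xofp p)).card = a := by
      rw [setB_falls halt]
      have hs := sum_pm p
      rw [htot] at hs
      rw [← hcard]
      omega
    refine ⟨⟨?_, ?_⟩, ?_, ?_⟩
    · intro j
      have h := hpre j
      rw [sum_prefix] at h
      have hq : (0:ℤ) ≤ SQ p (j.1+1) := h
      rw [sum_prefix]
      show (0:ℤ) ≤ SX (xofp p) (j.1+1)
      rw [SX_SQ halt (j.1+1) (by have := j.2; omega)]
      split <;> omega
    · rw [sum_univ_fin]
      show SX (xofp p) (2*k) = 0
      rw [SX_SQ halt (2*k) le_rfl, htotq, if_neg (by omega : ¬ (2*k) % 2 = 1)]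
      ring
    · rw [← riseset halt]
      exact hcard
    · have := card_evenT (xofp p)
      omega
  · rintro ⟨⟨hpre, htot⟩, hodd, heven⟩
    refine ⟨⟨halt, ?_, ?_⟩, ?_⟩
    · intro j
      have h := hpre j
      rw [sum_prefix] at h
      have hx : (0:ℤ) ≤ SX (xofp p) (j.1+1) := h
      rw [SX_SQ halt (j.1+1) (by have := j.2; omega)] at hx
      rw [sum_prefix]
      show (0:ℤ) ≤ SQ p (j.1+1)
      revert hx
      split <;> intro hx <;> omega
    · rw [sum_univ_fin]
      show SQ p (2*k) = 0
      rw [sum_univ_fin] at htot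
      have hx : SX (xofp p) (2*k) = 0 := htot
      rw [SX_SQ halt (2*k) le_rfl, if_neg (by omega : ¬ (2*k) % 2 = 1)] at hx
      omega
    · rw [riseset halt]
      exact hodd

lemma pofx_val (x : Fin (2*k) → Bool) (i : Fin (2*k)) :
    ((pofx x i : ℤ) - 1)
      = (if (i:ℕ) % 2 = 1 then (if x i then 1 else 0) else (if x i then 0 else -1)) := by
  rw [pofx]
  by_cases hpar : (i:ℕ) % 2 = 1 <;> rcases hx : x i with _|_ <;>
    simp only [hpar, hx, if_true, if_false, ite_true, ite_false] <;> decide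

lemma alt_pofx (x : Fin (2*k) → Bool) : Alt (pofx x) := by
  intro i
  constructor <;> intro hq <;> rw [pofx_val] at hq
  · rw [Nat.odd_iff]
    by_cases hpar : (i:ℕ) % 2 = 1
    · exact hpar
    · exfalso
      rw [if_neg hpar] at hq
      rcases hx : x i with _|_ <;> rw [hx] at hq <;> simp at hq
  · rw [Nat.even_iff]
    by_cases hpar : (i:ℕ) % 2 = 1
    · exfalso
      rw [if_pos hpar] at hq
      rcases hx : x i with _|_ <;> rw [hx] at hq <;> simp at hq
    · omega

lemma xofp_pofx (x : Fin (2*k) → Bool) (i : Fin (2*k)) : xofp (pofx x) i = x i := by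
  rw [xofp, pofx]
  by_cases hpar : (i:ℕ) % 2 = 1 <;> rcases hx : x i with _|_ <;>
    simp only [hpar, hx, if_true, if_false, ite_true, ite_false] <;> decide

lemma pofx_xofp {p : Fin (2*k) → Fin 3} (halt : Alt p) (i : Fin (2*k)) :
    pofx (xofp p) i = p i := by
  have hv3 := pval3 p i
  by_cases hpar : (i:ℕ) % 2 = 1
  · have hne0 : (p i).1 ≠ 0 := by
      intro h
      have := (halt i).2 (by rw [qcast, h]; norm_num)
      rw [Nat.even_iff] at this
      omega
    rw [pofx, xofp]
    simp only [if_pos hpar]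
    rcases hv3 with hv | hv | hv
    · omega
    · have hne : ¬ (p i = 2) := fun h => by rw [peq2] at h; omega
      rw [decide_eq_false hne, if_neg (by decide : ¬ ((false : Bool) = true))]
      exact Fin.ext (show (1 : Fin 3).1 = (p i).1 by rw [hv]; rfl)
    · have heq : p i = 2 := peq2.mpr hv
      rw [decide_eq_true heq, if_pos rfl]
      exact heq.symm
  · have hne2 : (p i).1 ≠ 2 := by
      intro h
      have := (halt i).1 (by rw [qcast, h]; norm_num)
      rw [Nat.odd_iff] at this
      omega
    rw [pofx, xofp]
    simp only [if_neg hpar]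
    rcases hv3 with hv | hv | hv
    · have hne : ¬ (p i = 1) := fun h => by rw [peq1] at h; omega
      rw [decide_eq_false hne, if_neg (by decide : ¬ ((false : Bool) = true))]
      exact Fin.ext (show (0 : Fin 3).1 = (p i).1 by rw [hv]; rfl)
    · have heq : p i = 1 := peq1.mpr hv
      rw [decide_eq_true heq, if_pos rfl]
      exact heq.symm
    · omega

def motzkinEquiv (k a : ℕ) :
    {p : Fin (2 * k) → Fin 3 // IsAltMotzkin k p ∧
        (Finset.univ.filter (fun i => (p i : ℤ) - 1 = 1)).card = a} ≃
    {x : Fin (2 * k) → Bool // IsBallot k x ∧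
        (Finset.univ.filter (fun i => x i = true ∧ Odd i.1)).card = a ∧
        (Finset.univ.filter (fun i => x i = true ∧ Even i.1)).card = k - a} where
  toFun pp := ⟨xofp pp.1, (masterMB pp.1 pp.2.1.1).mp pp.2⟩
  invFun xx := ⟨pofx xx.1, by
    have he : xofp (pofx xx.1) = xx.1 := funext (xofp_pofx xx.1)
    exact (masterMB (a := a) (pofx xx.1) (alt_pofx xx.1)).mpr (by rw [he]; exact xx.2)⟩
  left_inv pp := by
    apply Subtype.ext
    exact funext (pofx_xofp pp.2.1.1)
  right_inv xx := by
    apply Subtype.ext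
    exact funext (xofp_pofx xx.1)

end MotzkinEquiv

end Stmt2


/-- There is a bijection between alternating Motzkin paths of length `2k`
with `a` rises and ballot sequences of length `2k` with exactly `a` ones at
even positions (position `i+1` even, i.e. `Odd i.1`) and `k - a` ones at odd
positions; consequently the number of such ballot sequences is the Narayana
number `N(k,a)`. -/
theorem stmt2 (k a : ℕ) (ha : a ≤ k) :
    Nonempty
      ({p : Fin (2 * k) → Fin 3 // IsAltMotzkin k p ∧
          (Finset.univ.filter (fun i => (p i : ℤ) - 1 = 1)).card = a} ≃
       {x : Fin (2 * k) → Bool // IsBallot k x ∧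
          (Finset.univ.filter (fun i => x i = true ∧ Odd i.1)).card = a ∧
          (Finset.univ.filter (fun i => x i = true ∧ Even i.1)).card = k - a}) ∧
    Nat.card {x : Fin (2 * k) → Bool // IsBallot k x ∧
          (Finset.univ.filter (fun i => x i = true ∧ Odd i.1)).card = a ∧
          (Finset.univ.filter (fun i => x i = true ∧ Even i.1)).card = k - a}
      = k.choose a * (k - 1).choose a / (a + 1) := by
  constructor
  · exact ⟨Stmt2.motzkinEquiv k a⟩
  · rw [Nat.card_congr (Stmt2.ballotEquiv k a ha)]
    exact Stmt2.card_good k a
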